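/- arXiv:1405.1900 — 2 statements merged into one kernel-verified Lean document; each statement's English description precedes it below -/
import Mathlib

section
/- Let G be a finite abelian group with trivial character χ₁ and variables x_g ∈ C. If Θ(G) = ∏_{χ∈Ĝ} Σ_{g∈G} χ(g) x_g ≠ 0, then the element α = Σ_{g∈G} x_g g is invertible in C[G] and α^{-1} = (1/Θ(G)) · ∏_{χ∈Ĝ\{χ₁}} ( Σ_{g∈G} χ(g) x_g g ). -/
section Aux

variable {G : Type} [CommGroup G] [Fintype G]

/-- Monoid homs to `ℂ` from a group correspond to homs to `ℂˣ`. -/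
def homUnitsEquivAux : (G →* ℂˣ) ≃ (G →* ℂ) where
  toFun ψ := (Units.coeHom ℂ).comp ψ
  invFun χ := χ.toHomUnits
  left_inv ψ := by
    ext g
    rfl
  right_inv χ := by
    ext g
    rfl

lemma homUnitsEquivAux_apply (ψ : G →* ℂˣ) (g : G) :
    (homUnitsEquivAux ψ : G →* ℂ) g = (ψ g : ℂ) := rfl

noncomputable instance [Fintype (G →* ℂ)] : Fintype (G →* ℂˣ) :=
  Fintype.ofEquiv _ homUnitsEquivAux.symm

lemma exists_char_ne_one {h : G} (hh : h ≠ 1) : ∃ ψ : G →* ℂˣ, ψ h ≠ 1 := by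
  have : NeZero ((Monoid.exponent G : ℂ)) :=
    ⟨Nat.cast_ne_zero.mpr Monoid.exponent_ne_zero_of_finite⟩
  exact CommGroup.exists_apply_ne_one_of_hasEnoughRootsOfUnity G ℂ hh

/-- Orthogonality: the sum of all characters at a nontrivial element vanishes. -/
lemma sum_chars_eq_zero [Fintype (G →* ℂ)] {h : G} (hh : h ≠ 1) :
    ∑ χ : G →* ℂ, χ h = 0 := by
  classical
  have hre : ∑ χ : G →* ℂ, χ h = ∑ ψ : G →* ℂˣ, ((ψ h : ℂ)) := by
    rw [← Equiv.sum_comp (homUnitsEquivAux (G := G)) (fun χ => χ h)]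
    rfl
  rw [hre]
  -- evaluation at h is a monoid hom from the character group `G →* ℂˣ` to `ℂ`
  let ev : (G →* ℂˣ) →* ℂ :=
    { toFun := fun ψ => (ψ h : ℂ)
      map_one' := rfl
      map_mul' := fun ψ φ => rfl }
  have hev : ev ≠ 1 := by
    obtain ⟨ψ, hψ⟩ := exists_char_ne_one hh
    intro hcon
    apply hψ
    have : ev ψ = 1 := by rw [hcon]; rfl
    exact Units.ext this
  exact sum_hom_units_eq_zero ev hev

lemma sum_chars [Fintype (G →* ℂ)] (h : G) [Decidable (h = 1)] :
    ∑ χ : G →* ℂ, χ h = if h = 1 then (Fintype.card (G →* ℂ) : ℂ) else 0 := by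
  split_ifs with hc
  · subst hc; simp [Finset.card_univ]
  · exact sum_chars_eq_zero hc

/-- Fourier inversion formula for coefficients. -/
lemma lift_inversion [Fintype (G →* ℂ)] (f : MonoidAlgebra ℂ G) (h : G) :
    ∑ ψ : G →* ℂ, ψ h⁻¹ * (MonoidAlgebra.lift ℂ ℂ G ψ f) =
      (Fintype.card (G →* ℂ) : ℂ) * f.coeff h := by
  classical
  have hlift : ∀ ψ : G →* ℂ, MonoidAlgebra.lift ℂ ℂ G ψ f = ∑ g : G, f.coeff g * ψ g := by
    intro ψ
    rw [MonoidAlgebra.lift_apply]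
    rw [Finsupp.sum_fintype]
    · simp [smul_eq_mul]
    · intro g; simp
  calc ∑ ψ : G →* ℂ, ψ h⁻¹ * (MonoidAlgebra.lift ℂ ℂ G ψ f)
      = ∑ ψ : G →* ℂ, ∑ g : G, f.coeff g * ψ (h⁻¹ * g) := by
        refine Finset.sum_congr rfl fun ψ _ => ?_
        rw [hlift, Finset.mul_sum]
        refine Finset.sum_congr rfl fun g _ => ?_
        rw [map_mul]; ring
    _ = ∑ g : G, f.coeff g * ∑ ψ : G →* ℂ, ψ (h⁻¹ * g) := by
        rw [Finset.sum_comm]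
        refine Finset.sum_congr rfl fun g _ => ?_
        rw [Finset.mul_sum]
    _ = (Fintype.card (G →* ℂ) : ℂ) * f.coeff h := by
        rw [Finset.sum_congr rfl fun g (_ : g ∈ Finset.univ) => by
          rw [sum_chars (h⁻¹ * g)]]
        simp only [mul_ite, mul_zero, inv_mul_eq_one]
        rw [Finset.sum_ite_eq]
        simp [mul_comm]

/-- Joint injectivity of the character evaluations. -/
lemma lift_injective [Fintype (G →* ℂ)] {a b : MonoidAlgebra ℂ G}
    (hab : ∀ ψ : G →* ℂ, MonoidAlgebra.lift ℂ ℂ G ψ a = MonoidAlgebra.lift ℂ ℂ G ψ b) :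
    a = b := by
  classical
  have hcard : (Fintype.card (G →* ℂ) : ℂ) ≠ 0 := by
    exact_mod_cast Fintype.card_ne_zero
  ext h
  have := lift_inversion a h
  rw [Finset.sum_congr rfl fun ψ _ => by rw [hab ψ], lift_inversion b h] at this
  exact mul_left_cancel₀ hcard this.symm

end Aux

/-- Inverse element formula in the group algebra of a finite abelian group:
if `Θ(G) = ∏_χ Σ_g χ(g) x_g ≠ 0`, then `Σ_g x_g g` is invertible with inverse
`Θ(G)⁻¹ • ∏_{χ ≠ χ₁} (Σ_g χ(g) x_g g)`. -/
theorem inverse_formula_abelian_group_algebra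
    (G : Type) [CommGroup G] [Fintype G] [Fintype (G →* ℂ)] [DecidableEq (G →* ℂ)]
    (x : G → ℂ)
    (hΘ : (∏ χ : G →* ℂ, ∑ g : G, χ g * x g) ≠ 0) :
    (∑ g : G, (MonoidAlgebra.single g (x g) : MonoidAlgebra ℂ G)) *
      ((∏ χ : G →* ℂ, ∑ g : G, χ g * x g)⁻¹ •
        ∏ χ ∈ Finset.univ.erase (1 : G →* ℂ),
          (∑ g : G, (MonoidAlgebra.single g (χ g * x g) : MonoidAlgebra ℂ G))) = 1 ∧
    ((∏ χ : G →* ℂ, ∑ g : G, χ g * x g)⁻¹ •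
        ∏ χ ∈ Finset.univ.erase (1 : G →* ℂ),
          (∑ g : G, (MonoidAlgebra.single g (χ g * x g) : MonoidAlgebra ℂ G))) *
      (∑ g : G, (MonoidAlgebra.single g (x g) : MonoidAlgebra ℂ G)) = 1 := by
  classical
  set Θ : ℂ := ∏ χ : G →* ℂ, ∑ g : G, χ g * x g with hΘdef
  set β : (G →* ℂ) → MonoidAlgebra ℂ G :=
    fun χ => ∑ g : G, (MonoidAlgebra.single g (χ g * x g) : MonoidAlgebra ℂ G) with hβ
  have hβ1 : β 1 = ∑ g : G, (MonoidAlgebra.single g (x g) : MonoidAlgebra ℂ G) := by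
    simp only [hβ, MonoidHom.one_apply, one_mul]
  -- evaluate β under lifts
  have hliftβ : ∀ ψ χ : G →* ℂ,
      MonoidAlgebra.lift ℂ ℂ G ψ (β χ) = ∑ g : G, χ g * ψ g * x g := by
    intro ψ χ
    rw [hβ, map_sum]
    refine Finset.sum_congr rfl fun g _ => ?_
    rw [MonoidAlgebra.lift_single, smul_eq_mul]
    ring
  -- the full product equals Θ • 1
  have hprod : ∏ χ : G →* ℂ, β χ = Θ • (1 : MonoidAlgebra ℂ G) := by
    apply lift_injective
    intro ψ
    rw [map_prod, map_smul, map_one, smul_eq_mul, mul_one]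
    -- reindexing equiv: χ ↦ χ * ψ
    let e : (G →* ℂ) ≃ (G →* ℂ) :=
      homUnitsEquivAux.symm.trans ((Equiv.mulRight ψ.toHomUnits).trans homUnitsEquivAux)
    have he : ∀ χ : G →* ℂ, ∀ g : G, (e χ) g = χ g * ψ g := by
      intro χ g; rfl
    calc ∏ χ : G →* ℂ, MonoidAlgebra.lift ℂ ℂ G ψ (β χ)
        = ∏ χ : G →* ℂ, ∑ g : G, (e χ) g * x g := by
          refine Finset.prod_congr rfl fun χ _ => ?_
          rw [hliftβ]
          refine Finset.sum_congr rfl fun g _ => by rw [he]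
      _ = Θ := by
          rw [hΘdef]
          exact Equiv.prod_comp e (fun χ => ∑ g : G, χ g * x g)
  have hmain : (∑ g : G, (MonoidAlgebra.single g (x g) : MonoidAlgebra ℂ G)) *
      (∏ χ ∈ Finset.univ.erase (1 : G →* ℂ), β χ) = Θ • 1 := by
    rw [← hβ1, ← hprod]
    exact (Finset.mul_prod_erase Finset.univ β (Finset.mem_univ 1))
  have h1 : (∑ g : G, (MonoidAlgebra.single g (x g) : MonoidAlgebra ℂ G)) *
      (Θ⁻¹ • ∏ χ ∈ Finset.univ.erase (1 : G →* ℂ), β χ) = 1 := by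
    rw [mul_smul_comm, hmain, smul_smul, inv_mul_cancel₀ hΘ, one_smul]
  exact ⟨h1, by rw [mul_comm]; exact h1⟩
end

section
/- Let G be D_m with m even, or Q_m, with degree-one characters χ₃, χ₄ as in the standard character tables. Set α₃ = Σ_{g∈G} χ₃(g) x_g g and α₄ = Σ_{g∈⟨a⟩} χ₄(g) x_{g^{-1}} g + Σ_{g∈G\⟨a⟩} χ₄(g) x_g g in C[G]. Then α₃ and α₄ commute: α₃α₄ = α₄α₃. -/
/-- `α₁ = Σ_{g∈G} x_g g` for `D_m`. -/
noncomputable def dihedralAlpha1 (m : ℕ) [NeZero m] (x : DihedralGroup m → ℂ) :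
    MonoidAlgebra ℂ (DihedralGroup m) :=
  ∑ g : DihedralGroup m, MonoidAlgebra.single g (x g)

/-- `α₂ = Σ_{g∈⟨a⟩} x_{g⁻¹} g − Σ_{g∈G∖⟨a⟩} x_g g` for `D_m`. -/
noncomputable def dihedralAlpha2 (m : ℕ) [NeZero m] (x : DihedralGroup m → ℂ) :
    MonoidAlgebra ℂ (DihedralGroup m) :=
  (∑ k : ZMod m, MonoidAlgebra.single (DihedralGroup.r k) (x ((DihedralGroup.r k)⁻¹))) -
  ∑ k : ZMod m, MonoidAlgebra.single (DihedralGroup.sr k) (x (DihedralGroup.sr k))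

/-- `α₃ = Σ_g χ₃(g) x_g g` for `D_m`, where `χ₃(a^k) = (−1)^k`, `χ₃(a^k b) = (−1)^k c₃`
with `c₃ = χ₃(b)`. -/
noncomputable def dihedralAlpha3 (m : ℕ) [NeZero m] (c₃ : ℂ) (x : DihedralGroup m → ℂ) :
    MonoidAlgebra ℂ (DihedralGroup m) :=
  (∑ k : ZMod m, MonoidAlgebra.single (DihedralGroup.r k)
      ((-1 : ℂ) ^ k.val * x (DihedralGroup.r k))) +
  ∑ k : ZMod m, MonoidAlgebra.single (DihedralGroup.r k * DihedralGroup.sr 0)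
      ((-1 : ℂ) ^ k.val * c₃ * x (DihedralGroup.r k * DihedralGroup.sr 0))

/-- `α₄ = Σ_{g∈⟨a⟩} χ₄(g) x_{g⁻¹} g + Σ_{g∉⟨a⟩} χ₄(g) x_g g` for `D_m`, where
`χ₄(a^k) = (−1)^k`, `χ₄(a^k b) = (−1)^k c₄` with `c₄ = χ₄(b)`. -/
noncomputable def dihedralAlpha4 (m : ℕ) [NeZero m] (c₄ : ℂ) (x : DihedralGroup m → ℂ) :
    MonoidAlgebra ℂ (DihedralGroup m) :=
  (∑ k : ZMod m, MonoidAlgebra.single (DihedralGroup.r k)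
      ((-1 : ℂ) ^ k.val * x ((DihedralGroup.r k)⁻¹))) +
  ∑ k : ZMod m, MonoidAlgebra.single (DihedralGroup.r k * DihedralGroup.sr 0)
      ((-1 : ℂ) ^ k.val * c₄ * x (DihedralGroup.r k * DihedralGroup.sr 0))

/-- `α₁ = Σ_{g∈G} x_g g` for `Q_m`. -/
noncomputable def quaternionAlpha1 (m : ℕ) [NeZero m] (x : QuaternionGroup m → ℂ) :
    MonoidAlgebra ℂ (QuaternionGroup m) :=
  ∑ g : QuaternionGroup m, MonoidAlgebra.single g (x g)

/-- `α₂ = Σ_{g∈⟨a⟩} x_{g⁻¹} g − Σ_{g∈G∖⟨a⟩} x_g g` for `Q_m`. -/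
noncomputable def quaternionAlpha2 (m : ℕ) [NeZero m] (x : QuaternionGroup m → ℂ) :
    MonoidAlgebra ℂ (QuaternionGroup m) :=
  (∑ k : ZMod (2 * m),
      MonoidAlgebra.single (QuaternionGroup.a k) (x ((QuaternionGroup.a k)⁻¹))) -
  ∑ k : ZMod (2 * m), MonoidAlgebra.single (QuaternionGroup.xa k) (x (QuaternionGroup.xa k))

/-- `α₃ = Σ_g χ₃(g) x_g g` for `Q_m`, where `χ₃(a^k) = (−1)^k`, `χ₃(a^k b) = (−1)^k c₃`. -/
noncomputable def quaternionAlpha3 (m : ℕ) [NeZero m] (c₃ : ℂ) (x : QuaternionGroup m → ℂ) :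
    MonoidAlgebra ℂ (QuaternionGroup m) :=
  (∑ k : ZMod (2 * m), MonoidAlgebra.single (QuaternionGroup.a k)
      ((-1 : ℂ) ^ k.val * x (QuaternionGroup.a k))) +
  ∑ k : ZMod (2 * m), MonoidAlgebra.single (QuaternionGroup.a k * QuaternionGroup.xa 0)
      ((-1 : ℂ) ^ k.val * c₃ * x (QuaternionGroup.a k * QuaternionGroup.xa 0))

/-- `α₄ = Σ_{g∈⟨a⟩} χ₄(g) x_{g⁻¹} g + Σ_{g∉⟨a⟩} χ₄(g) x_g g` for `Q_m`, where
`χ₄(a^k) = (−1)^k`, `χ₄(a^k b) = (−1)^k c₄`. -/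
noncomputable def quaternionAlpha4 (m : ℕ) [NeZero m] (c₄ : ℂ) (x : QuaternionGroup m → ℂ) :
    MonoidAlgebra ℂ (QuaternionGroup m) :=
  (∑ k : ZMod (2 * m), MonoidAlgebra.single (QuaternionGroup.a k)
      ((-1 : ℂ) ^ k.val * x ((QuaternionGroup.a k)⁻¹))) +
  ∑ k : ZMod (2 * m), MonoidAlgebra.single (QuaternionGroup.a k * QuaternionGroup.xa 0)
      ((-1 : ℂ) ^ k.val * c₄ * x (QuaternionGroup.a k * QuaternionGroup.xa 0))


lemma negOnePow_neg_val {m : ℕ} [NeZero m] (hm : Even m) (k : ZMod m) :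
    ((-1 : ℂ)) ^ (-k).val = (-1 : ℂ) ^ k.val := by
  rw [ZMod.neg_val]
  split_ifs with h
  · simp [h]
  · rw [neg_one_pow_eq_pow_mod_two, neg_one_pow_eq_pow_mod_two (n := k.val)]
    congr 1
    have h1 := ZMod.val_lt k
    obtain ⟨t, ht⟩ := hm
    omega

lemma single_congr {G : Type*} {a a' : G} {b b' : ℂ} (h : a = a') (h' : b = b') :
    (MonoidAlgebra.single a b : MonoidAlgebra ℂ G) = MonoidAlgebra.single a' b' := by
  rw [h, h']

/-- The reindexing equivalence `(k, l) ↦ (l, -k)`. -/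
def pairEquiv (n : ℕ) : (ZMod n × ZMod n) ≃ (ZMod n × ZMod n) where
  toFun p := (p.2, -p.1)
  invFun p := (-p.2, p.1)
  left_inv p := by simp
  right_inv p := by simp

section Dihedral
open DihedralGroup MonoidAlgebra

lemma r_inv {n : ℕ} (i : ZMod n) : (r i : DihedralGroup n)⁻¹ = r (-i) := rfl

lemma dihedral_comm (m : ℕ) [NeZero m] (hm : Even m) (c : ℂ) (x : DihedralGroup m → ℂ) :
    dihedralAlpha3 m c x * dihedralAlpha4 m (-c) x =
      dihedralAlpha4 m (-c) x * dihedralAlpha3 m c x := by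
  unfold dihedralAlpha3 dihedralAlpha4
  set A : MonoidAlgebra ℂ (DihedralGroup m) :=
    ∑ k : ZMod m, single (r k) ((-1 : ℂ) ^ k.val * x (r k)) with hA
  set B : MonoidAlgebra ℂ (DihedralGroup m) :=
    ∑ k : ZMod m, single (r k * sr 0) ((-1 : ℂ) ^ k.val * c * x (r k * sr 0)) with hB
  set A' : MonoidAlgebra ℂ (DihedralGroup m) :=
    ∑ k : ZMod m, single (r k) ((-1 : ℂ) ^ k.val * x ((r k)⁻¹)) with hA'
  set B' : MonoidAlgebra ℂ (DihedralGroup m) :=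
    ∑ k : ZMod m, single (r k * sr 0) ((-1 : ℂ) ^ k.val * (-c) * x (r k * sr 0)) with hB'
  have h1 : A * A' = A' * A := by
    rw [hA, hA', Fintype.sum_mul_sum, Fintype.sum_mul_sum]
    rw [Finset.sum_comm]
    refine Finset.sum_congr rfl fun k _ => Finset.sum_congr rfl fun l _ => ?_
    simp only [single_mul_single, r_mul_r]
    exact single_congr (by congr 1 <;> ring) (by ring)
  have h2 : B * B' = B' * B := by
    rw [hB, hB', Fintype.sum_mul_sum, Fintype.sum_mul_sum]
    refine Finset.sum_congr rfl fun k _ => Finset.sum_congr rfl fun l _ => ?_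
    simp only [single_mul_single]
    congr 1
    ring
  have h3 : A * B' = -(B * A') := by
    rw [hA, hB, hA', hB', Fintype.sum_mul_sum, Fintype.sum_mul_sum,
      ← Finset.sum_product', ← Finset.sum_product', ← Finset.sum_neg_distrib,
      Finset.univ_product_univ]
    refine Fintype.sum_equiv (pairEquiv m) _ _ fun p => ?_
    simp only [pairEquiv, Equiv.coe_fn_mk, single_mul_single, r_mul_sr, sr_mul_r, r_inv,
      neg_neg, negOnePow_neg_val hm]
    rw [← MonoidAlgebra.single_neg]
    exact single_congr (by congr 1 <;> ring) (by ring)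
  have h4 : A' * B = -(B' * A) := by
    rw [hA, hB, hA', hB', Fintype.sum_mul_sum, Fintype.sum_mul_sum,
      ← Finset.sum_product', ← Finset.sum_product', ← Finset.sum_neg_distrib,
      Finset.univ_product_univ]
    refine Fintype.sum_equiv (pairEquiv m) _ _ fun p => ?_
    simp only [pairEquiv, Equiv.coe_fn_mk, single_mul_single, r_mul_sr, sr_mul_r, r_inv,
      neg_neg, negOnePow_neg_val hm]
    rw [← MonoidAlgebra.single_neg]
    exact single_congr (by congr 1 <;> ring) (by ring)
  simp only [add_mul, mul_add]
  rw [h1, h2, h3, h4]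
  abel

end Dihedral

section Quaternion
open QuaternionGroup MonoidAlgebra

lemma a_inv {n : ℕ} (i : ZMod (2 * n)) : (a i : QuaternionGroup n)⁻¹ = a (-i) := rfl

lemma quaternion_comm (m : ℕ) [NeZero m] (c : ℂ) (y : QuaternionGroup m → ℂ) :
    quaternionAlpha3 m c y * quaternionAlpha4 m (-c) y =
      quaternionAlpha4 m (-c) y * quaternionAlpha3 m c y := by
  have hm : Even (2 * m) := even_two_mul m
  unfold quaternionAlpha3 quaternionAlpha4
  set A : MonoidAlgebra ℂ (QuaternionGroup m) :=
    ∑ k : ZMod (2 * m), single (a k) ((-1 : ℂ) ^ k.val * y (a k)) with hA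
  set B : MonoidAlgebra ℂ (QuaternionGroup m) :=
    ∑ k : ZMod (2 * m), single (a k * xa 0) ((-1 : ℂ) ^ k.val * c * y (a k * xa 0)) with hB
  set A' : MonoidAlgebra ℂ (QuaternionGroup m) :=
    ∑ k : ZMod (2 * m), single (a k) ((-1 : ℂ) ^ k.val * y ((a k)⁻¹)) with hA'
  set B' : MonoidAlgebra ℂ (QuaternionGroup m) :=
    ∑ k : ZMod (2 * m), single (a k * xa 0) ((-1 : ℂ) ^ k.val * (-c) * y (a k * xa 0)) with hB'
  have h1 : A * A' = A' * A := by
    rw [hA, hA', Fintype.sum_mul_sum, Fintype.sum_mul_sum]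
    rw [Finset.sum_comm]
    refine Finset.sum_congr rfl fun k _ => Finset.sum_congr rfl fun l _ => ?_
    simp only [single_mul_single, a_mul_a]
    exact single_congr (by congr 1 <;> ring) (by ring)
  have h2 : B * B' = B' * B := by
    rw [hB, hB', Fintype.sum_mul_sum, Fintype.sum_mul_sum]
    refine Finset.sum_congr rfl fun k _ => Finset.sum_congr rfl fun l _ => ?_
    simp only [single_mul_single]
    congr 1
    ring
  have h3 : A * B' = -(B * A') := by
    rw [hA, hB, hA', hB', Fintype.sum_mul_sum, Fintype.sum_mul_sum,
      ← Finset.sum_product', ← Finset.sum_product', ← Finset.sum_neg_distrib,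
      Finset.univ_product_univ]
    refine Fintype.sum_equiv (pairEquiv (2 * m)) _ _ fun p => ?_
    simp only [pairEquiv, Equiv.coe_fn_mk, single_mul_single, a_mul_xa, xa_mul_a, a_inv,
      neg_neg, negOnePow_neg_val hm]
    rw [← MonoidAlgebra.single_neg]
    exact single_congr (by congr 1 <;> ring) (by ring)
  have h4 : A' * B = -(B' * A) := by
    rw [hA, hB, hA', hB', Fintype.sum_mul_sum, Fintype.sum_mul_sum,
      ← Finset.sum_product', ← Finset.sum_product', ← Finset.sum_neg_distrib,
      Finset.univ_product_univ]
    refine Fintype.sum_equiv (pairEquiv (2 * m)) _ _ fun p => ?_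
    simp only [pairEquiv, Equiv.coe_fn_mk, single_mul_single, a_mul_xa, xa_mul_a, a_inv,
      neg_neg, negOnePow_neg_val hm]
    rw [← MonoidAlgebra.single_neg]
    exact single_congr (by congr 1 <;> ring) (by ring)
  simp only [add_mul, mul_add]
  rw [h1, h2, h3, h4]
  abel

end Quaternion
/-- For `G = D_m` (`m` even, `χ₃(b)=1`, `χ₄(b)=−1`) or `G = Q_m` (`χ₃(b)=i`, `χ₄(b)=−i`
for `m` odd; `χ₃(b)=1`, `χ₄(b)=−1` for `m` even), the elements `α₃` and `α₄` of `ℂ[G]`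
commute: `α₃ α₄ = α₄ α₃`. -/
theorem alpha3_alpha4_commute (m : ℕ) [NeZero m]
    (x : DihedralGroup m → ℂ) (y : QuaternionGroup m → ℂ) :
    (Even m →
      dihedralAlpha3 m 1 x * dihedralAlpha4 m (-1) x =
        dihedralAlpha4 m (-1) x * dihedralAlpha3 m 1 x) ∧
    (Odd m →
      quaternionAlpha3 m Complex.I y * quaternionAlpha4 m (-Complex.I) y =
        quaternionAlpha4 m (-Complex.I) y * quaternionAlpha3 m Complex.I y) ∧
    (Even m →
      quaternionAlpha3 m 1 y * quaternionAlpha4 m (-1) y =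
        quaternionAlpha4 m (-1) y * quaternionAlpha3 m 1 y) := by
  exact ⟨fun hm => dihedral_comm m hm 1 x, fun _ => quaternion_comm m Complex.I y,
    fun _ => quaternion_comm m 1 y⟩
end
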